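/- Let K be a number field, let 𝔭₁, …, 𝔭_k be distinct nonzero primes of O_K, and let J = ⋂ᵢ 𝔭ᵢ(O_K)_{𝔭ᵢ} ⊆ K. Then the set J·J = {xy : x, y ∈ J} equals ⋂ᵢ 𝔭ᵢ²(O_K)_{𝔭ᵢ}, i.e., the set of r ∈ K with v_{𝔭ᵢ}(r) ≥ 2 for all i (together with 0). -/

import Mathlib

open IsDedekindDomain NumberField Classical

/-- The normalized `𝔭`-adic valuation of `r ∈ K`, valued in `WithTop ℤ` with the
convention `v_𝔭(0) = +∞`. -/
noncomputable def vT {K : Type*} [Field K] [NumberField K]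
    (v : HeightOneSpectrum (𝓞 K)) (r : K) : WithTop ℤ :=
  if h : r = 0 then ⊤
  else ((-Multiplicative.toAdd (WithZero.unzero
    ((v.valuation (K := K)).ne_zero_iff.mpr h)) : ℤ) : WithTop ℤ)

lemma le_vT_iff {K : Type*} [Field K] [NumberField K]
    (v : HeightOneSpectrum (𝓞 K)) (r : K) (n : ℤ) :
    (n : WithTop ℤ) ≤ vT v r ↔ v.valuation (K := K) r ≤ Multiplicative.ofAdd (-n) := by
  unfold vT
  split_ifs with h
  · simp [h, map_zero, zero_le']
  · rw [WithTop.coe_le_coe, le_neg, ← Multiplicative.ofAdd_le, ofAdd_toAdd,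
      ← WithZero.coe_le_coe, WithZero.coe_unzero]

/-- For distinct nonzero primes `𝔭₁, …, 𝔭_k` of `O_K` and
`J = ⋂ᵢ 𝔭ᵢ(O_K)_{𝔭ᵢ} = {r ∈ K : ∀ i, v_{𝔭ᵢ}(r) ≥ 1}`, the set of products
`J·J = {xy : x, y ∈ J}` equals `⋂ᵢ 𝔭ᵢ²(O_K)_{𝔭ᵢ} = {r ∈ K : ∀ i, v_{𝔭ᵢ}(r) ≥ 2}`
(both sets containing `0`). -/
theorem stmt_16 {K : Type*} [Field K] [NumberField K] {k : ℕ}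
    (p : Fin k → HeightOneSpectrum (𝓞 K)) (hp : Function.Injective p) :
    {r : K | ∃ x ∈ (⋂ i, {r : K | 1 ≤ vT (p i) r}), ∃ y ∈ (⋂ i, {r : K | 1 ≤ vT (p i) r}),
        r = x * y} =
      ⋂ i, {r : K | 2 ≤ vT (p i) r} := by
  have key : ∀ (r : K) (n : ℤ) i, ((n : ℤ) : WithTop ℤ) ≤ vT (p i) r ↔
      (p i).valuation (K := K) r ≤ Multiplicative.ofAdd (-n) := fun r n i => le_vT_iff (p i) r n
  ext r
  simp only [Set.mem_setOf_eq, Set.mem_iInter]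
  constructor
  · rintro ⟨x, hx, y, hy, rfl⟩ i
    have h1 : ((1 : ℤ) : WithTop ℤ) ≤ vT (p i) x := by exact_mod_cast hx i
    have h2 : ((1 : ℤ) : WithTop ℤ) ≤ vT (p i) y := by exact_mod_cast hy i
    rw [key] at h1 h2
    have : ((2 : ℤ) : WithTop ℤ) ≤ vT (p i) (x * y) := by
      rw [key, ((p i).valuation (K := K)).map_mul x y]
      calc (p i).valuation (K := K) x * (p i).valuation (K := K) y
          ≤ ((Multiplicative.ofAdd (-1 : ℤ) : Multiplicative ℤ) : WithZero (Multiplicative ℤ)) * ((Multiplicative.ofAdd (-1 : ℤ) : Multiplicative ℤ) : WithZero (Multiplicative ℤ)) :=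
            mul_le_mul' h1 h2
        _ = ((Multiplicative.ofAdd (-2 : ℤ) : Multiplicative ℤ) : WithZero (Multiplicative ℤ)) := by
            rw [← WithZero.coe_mul, ← ofAdd_add]; norm_num
    exact_mod_cast this
  · intro hr
    rcases eq_or_ne r 0 with rfl | hr0
    · refine ⟨0, fun i => ?_, 0, fun i => ?_, by ring⟩ <;>
        · show (1 : WithTop ℤ) ≤ vT (p i) 0
          simp [vT]
    rcases Nat.eq_zero_or_pos k with rfl | hk
    · exact ⟨r, fun i => i.elim0, 1, fun i => i.elim0, by ring⟩
    -- choose simultaneous uniformizer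
    choose π hπ using fun i => (p i).intValuation_exists_uniformizer
    obtain ⟨y0, hy0⟩ := IsDedekindDomain.exists_forall_sub_mem_ideal (s := Finset.univ)
      (fun i => (p i).asIdeal) (fun _ => 2)
      (fun i _ => Ideal.prime_of_isPrime (p i).ne_bot (p i).isPrime)
      (fun i _ j _ hij h => hij (hp (HeightOneSpectrum.ext h)))
      (fun i => π i)
    have hval : ∀ i, (p i).intValuationDef y0 = Multiplicative.ofAdd (-1 : ℤ) := by
      intro i
      have hmem := hy0 i (Finset.mem_univ i)
      have hlt : (p i).intValuation (y0 - π i) < (p i).intValuation (π i) := by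
        calc (p i).intValuation (y0 - π i) ≤ Multiplicative.ofAdd (-(2:ℕ) : ℤ) := by
              exact ((p i).intValuation_le_pow_iff_dvd (y0 - π i) 2).mpr
                (by rw [Ideal.dvd_span_singleton]; exact hmem)
          _ < Multiplicative.ofAdd (-1 : ℤ) := by
              rw [WithZero.coe_lt_coe, Multiplicative.ofAdd_lt]; norm_num
          _ = (p i).intValuation (π i) := by
              exact (hπ i).symm
      have := Valuation.map_add_eq_of_lt_right ((p i).intValuation) hlt
      simp only [sub_add_cancel, hπ i] at this; exact this
    set x : K := algebraMap (𝓞 K) K y0 with hxdef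
    have hx0 : x ≠ 0 := by
      intro h
      have hz : y0 = 0 := (map_eq_zero_iff _ (IsFractionRing.injective (𝓞 K) K)).mp h
      have h0 := hval ⟨0, hk⟩
      rw [hz, HeightOneSpectrum.intValuationDef_if_pos _ rfl] at h0
      exact WithZero.zero_ne_coe h0
    have hvx : ∀ i, (p i).valuation (K := K) x = Multiplicative.ofAdd (-1 : ℤ) := by
      intro i
      rw [hxdef, HeightOneSpectrum.valuation_of_algebraMap]
      rw [HeightOneSpectrum.intValuation_apply, hval i]
    refine ⟨x, fun i => ?_, r / x, fun i => ?_, by field_simp⟩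
    · show (1 : WithTop ℤ) ≤ vT (p i) x
      have : ((1:ℤ) : WithTop ℤ) ≤ vT (p i) x := by rw [key, hvx i]
      exact_mod_cast this
    · show (1 : WithTop ℤ) ≤ vT (p i) (r / x)
      have h2 : ((2:ℤ) : WithTop ℤ) ≤ vT (p i) r := by exact_mod_cast hr i
      rw [key] at h2
      have : ((1:ℤ) : WithTop ℤ) ≤ vT (p i) (r / x) := by
        rw [key, map_div₀, hvx i]
        calc (p i).valuation (K := K) r / ((Multiplicative.ofAdd (-1 : ℤ) : Multiplicative ℤ) : WithZero (Multiplicative ℤ))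
            ≤ ((Multiplicative.ofAdd (-2 : ℤ) : Multiplicative ℤ) : WithZero (Multiplicative ℤ)) / ((Multiplicative.ofAdd (-1 : ℤ) : Multiplicative ℤ) : WithZero (Multiplicative ℤ)) := by
              gcongr
              exact zero_le' 
          _ = ((Multiplicative.ofAdd (-1 : ℤ) : Multiplicative ℤ) : WithZero (Multiplicative ℤ)) := by
              rw [← WithZero.coe_div, ← ofAdd_sub]; norm_num
      exact_mod_cast this
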